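/- Let W : GL⁺(2) → ℝ be objective, isotropic and isochoric, and let g : (0,∞)×(0,∞) → ℝ and h : (0,∞) → ℝ be the uniquely determined functions with W(F) = g(λ₁, λ₂) = h(λ₁/λ₂) = h(λ₂/λ₁) for all F ∈ GL⁺(2) with singular values λ₁, λ₂. Then the following are equivalent: (i) W is polyconvex on GL⁺(2); (ii) W is rank-one convex on GL⁺(2); (iii) g is separately convex (convex in each argument separately); (iv) h is convex on (0,∞); (v) h is convex and nondecreasing on [1,∞). -/

import Mathlib

open Matrix

/-- `l1`, `l2` are the singular values of the 2×2 matrix `F`: they are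
nonnegative and `l1², l2²` are the eigenvalues of `FᵀF`. -/
def IsSingVals (F : Matrix (Fin 2) (Fin 2) ℝ) (l1 l2 : ℝ) : Prop :=
  0 ≤ l1 ∧ 0 ≤ l2 ∧ l1 ^ 2 + l2 ^ 2 = (Fᵀ * F).trace ∧ l1 ^ 2 * l2 ^ 2 = (Fᵀ * F).det

/-- Rank-one convexity on `GL⁺(2)`: convexity along rank-one line segments that
stay inside `GL⁺(2)`. -/
def RankOneConvexGLp (W : Matrix (Fin 2) (Fin 2) ℝ → ℝ) : Prop :=
  ∀ F : Matrix (Fin 2) (Fin 2) ℝ, 0 < F.det →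
    ∀ ξ η : Fin 2 → ℝ,
      (∀ t ∈ Set.Icc (0:ℝ) 1, 0 < (F + t • vecMulVec ξ η).det) →
      ∀ θ ∈ Set.Icc (0:ℝ) 1,
        W (θ • F + (1 - θ) • (F + vecMulVec ξ η)) ≤
          θ * W F + (1 - θ) * W (F + vecMulVec ξ η)

/-- Convexity for extended-real-valued functions on `ℝ^{2×2} × ℝ`. -/
def ConvexEReal (P : Matrix (Fin 2) (Fin 2) ℝ × ℝ → EReal) : Prop :=
  ∀ x y : Matrix (Fin 2) (Fin 2) ℝ × ℝ, ∀ a b : ℝ, 0 ≤ a → 0 ≤ b → a + b = 1 →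
    P (a • x + b • y) ≤ (a : EReal) * P x + (b : EReal) * P y

/-- Polyconvexity on `GL⁺(2)` in the sense of Mielke: the extension of `W` by
`+∞` outside `GL⁺(2)` is a convex function of `(F, det F)`. -/
def PolyconvexGLp (W : Matrix (Fin 2) (Fin 2) ℝ → ℝ) : Prop :=
  ∃ P : Matrix (Fin 2) (Fin 2) ℝ × ℝ → EReal, ConvexEReal P ∧
    ∀ F : Matrix (Fin 2) (Fin 2) ℝ,
      (if 0 < F.det then (W F : EReal) else ⊤) = P (F, F.det)

/-! ### Auxiliary elementary lemmas -/

lemma combo_pos {a b x y : ℝ} (ha : 0 ≤ a) (hb : 0 ≤ b) (hab : a + b = 1)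
    (hx : 0 < x) (hy : 0 < y) : 0 < a * x + b * y := by
  rcases le_total x y with hxy | hxy
  · have : a * x + b * x ≤ a * x + b * y := by nlinarith
    nlinarith
  · have : a * y + b * y ≤ a * x + b * y := by nlinarith
    nlinarith

/-- diagonal matrix -/
def Dg (x y : ℝ) : Matrix (Fin 2) (Fin 2) ℝ := Matrix.of ![![x, 0], ![0, y]]

lemma Dg_det (x y : ℝ) : (Dg x y).det = x * y := by
  simp [Dg, Matrix.det_fin_two]

lemma Dg_det_pos {x y : ℝ} (hx : 0 < x) (hy : 0 < y) : 0 < (Dg x y).det := by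
  rw [Dg_det]; exact mul_pos hx hy

lemma Dg_isSingVals (x y : ℝ) (hx : 0 < x) (hy : 0 < y) : IsSingVals (Dg x y) x y := by
  refine ⟨hx.le, hy.le, ?_, ?_⟩
  · simp [Dg, Matrix.trace_fin_two, Matrix.mul_apply, Fin.sum_univ_two, Matrix.vecHead,
      Matrix.vecTail]
    ring
  · rw [Matrix.det_mul, Matrix.det_transpose, Dg_det]; ring

/-! ### The largest singular value -/

noncomputable def NN (F : Matrix (Fin 2) (Fin 2) ℝ) : ℝ :=
  (Real.sqrt ((F 0 0 + F 1 1) ^ 2 + (F 0 1 - F 1 0) ^ 2) +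
   Real.sqrt ((F 0 0 - F 1 1) ^ 2 + (F 0 1 + F 1 0) ^ 2)) / 2

lemma NN_nonneg (F : Matrix (Fin 2) (Fin 2) ℝ) : 0 ≤ NN F := by
  unfold NN; positivity

lemma trace_transpose_mul_self (F : Matrix (Fin 2) (Fin 2) ℝ) :
    (Fᵀ * F).trace = F 0 0 ^ 2 + F 0 1 ^ 2 + F 1 0 ^ 2 + F 1 1 ^ 2 := by
  simp [Matrix.trace_fin_two, Matrix.mul_apply, Fin.sum_univ_two]
  ring

lemma NN_pos {F : Matrix (Fin 2) (Fin 2) ℝ} (hd : 0 < F.det) : 0 < NN F := by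
  have hdet : F.det = F 0 0 * F 1 1 - F 0 1 * F 1 0 := Matrix.det_fin_two F
  have h1 : 0 < (F 0 0 + F 1 1) ^ 2 + (F 0 1 - F 1 0) ^ 2 := by
    nlinarith [sq_nonneg (F 0 0 - F 1 1), sq_nonneg (F 0 1 + F 1 0)]
  have := Real.sqrt_pos.mpr h1
  have h2 : (0:ℝ) ≤ Real.sqrt ((F 0 0 - F 1 1) ^ 2 + (F 0 1 + F 1 0) ^ 2) := Real.sqrt_nonneg _
  unfold NN; linarith

lemma NN_facts {F : Matrix (Fin 2) (Fin 2) ℝ} (hd : 0 < F.det) :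
    NN F ^ 2 + (F.det / NN F) ^ 2 = (Fᵀ * F).trace ∧ F.det ≤ NN F ^ 2 := by
  obtain ⟨p, hp⟩ : ∃ p : ℝ, (Fᵀ * F).trace = p := ⟨_, rfl⟩
  obtain ⟨d, hdd⟩ : ∃ d : ℝ, F.det = d := ⟨_, rfl⟩
  have hptr : p = F 0 0 ^ 2 + F 0 1 ^ 2 + F 1 0 ^ 2 + F 1 1 ^ 2 := by
    rw [← hp, trace_transpose_mul_self]
  have hdet : d = F 0 0 * F 1 1 - F 0 1 * F 1 0 := by rw [← hdd, Matrix.det_fin_two]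
  have hd' : 0 < d := hdd ▸ hd
  have e1 : (F 0 0 + F 1 1) ^ 2 + (F 0 1 - F 1 0) ^ 2 = p + 2 * d := by
    rw [hptr, hdet]; ring
  have e2 : (F 0 0 - F 1 1) ^ 2 + (F 0 1 + F 1 0) ^ 2 = p - 2 * d := by
    rw [hptr, hdet]; ring
  have h1 : (0:ℝ) ≤ p + 2 * d := by rw [← e1]; positivity
  have h2 : (0:ℝ) ≤ p - 2 * d := by rw [← e2]; positivity
  have hs : Real.sqrt (p + 2 * d) * Real.sqrt (p - 2 * d)
      = Real.sqrt (p ^ 2 - 4 * d ^ 2) := by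
    rw [← Real.sqrt_mul h1]; congr 1; ring
  have hA : Real.sqrt (p + 2 * d) ^ 2 = p + 2 * d := Real.sq_sqrt h1
  have hC : Real.sqrt (p - 2 * d) ^ 2 = p - 2 * d := Real.sq_sqrt h2
  have hq0 : 0 ≤ Real.sqrt (p ^ 2 - 4 * d ^ 2) := Real.sqrt_nonneg _
  have hq2 : Real.sqrt (p ^ 2 - 4 * d ^ 2) ^ 2 = p ^ 2 - 4 * d ^ 2 := by
    rw [Real.sq_sqrt]; nlinarith
  have hNN : NN F ^ 2 = (p + Real.sqrt (p ^ 2 - 4 * d ^ 2)) / 2 := by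
    unfold NN
    rw [e1, e2]
    linear_combination (1/4) * hA + (1/4) * hC + (1/2) * hs
  have hNpos : 0 < NN F := NN_pos hd
  have hn : NN F ≠ 0 := ne_of_gt hNpos
  have hdn : (d / NN F) ^ 2 * NN F ^ 2 = d ^ 2 := by field_simp
  have key : NN F ^ 2 * NN F ^ 2 - p * NN F ^ 2 + d ^ 2 = 0 := by
    rw [hNN]; linear_combination (1/4) * hq2
  constructor
  · rw [hp, hdd]
    have h3 : (NN F ^ 2 + (d / NN F) ^ 2 - p) * NN F ^ 2 = 0 := by
      linear_combination key + hdn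
    have h4 : NN F ^ 2 + (d / NN F) ^ 2 - p = 0 := by
      rcases mul_eq_zero.mp h3 with h | h
      · exact h
      · exact absurd h (by positivity)
    linarith
  · rw [hdd, hNN]; linarith [hq0, h2]

lemma NN_isSingVals {F : Matrix (Fin 2) (Fin 2) ℝ} (hd : 0 < F.det) :
    IsSingVals F (NN F) (F.det / NN F) := by
  have hN := NN_pos hd
  refine ⟨(NN_nonneg F), div_nonneg hd.le hN.le, (NN_facts hd).1, ?_⟩
  rw [Matrix.det_mul, Matrix.det_transpose]
  field_simp

/-! ### Convexity building blocks -/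

lemma sqrt_add_sq_convex (a b x1 y1 x2 y2 : ℝ) (ha : 0 ≤ a) (hb : 0 ≤ b) :
    Real.sqrt ((a * x1 + b * x2) ^ 2 + (a * y1 + b * y2) ^ 2) ≤
      a * Real.sqrt (x1 ^ 2 + y1 ^ 2) + b * Real.sqrt (x2 ^ 2 + y2 ^ 2) := by
  have s1 : Real.sqrt (x1 ^ 2 + y1 ^ 2) ^ 2 = x1 ^ 2 + y1 ^ 2 := Real.sq_sqrt (by positivity)
  have s2 : Real.sqrt (x2 ^ 2 + y2 ^ 2) ^ 2 = x2 ^ 2 + y2 ^ 2 := Real.sq_sqrt (by positivity)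
  have cs : (x1 * x2 + y1 * y2) ^ 2 ≤ (x1 ^ 2 + y1 ^ 2) * (x2 ^ 2 + y2 ^ 2) := by
    nlinarith [sq_nonneg (x1 * y2 - x2 * y1)]
  have h1 : x1 * x2 + y1 * y2 ≤ Real.sqrt (x1 ^ 2 + y1 ^ 2) * Real.sqrt (x2 ^ 2 + y2 ^ 2) :=
    calc x1 * x2 + y1 * y2 ≤ |x1 * x2 + y1 * y2| := le_abs_self _
      _ = Real.sqrt ((x1 * x2 + y1 * y2) ^ 2) := (Real.sqrt_sq_eq_abs _).symm
      _ ≤ Real.sqrt ((x1 ^ 2 + y1 ^ 2) * (x2 ^ 2 + y2 ^ 2)) := Real.sqrt_le_sqrt cs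
      _ = _ := Real.sqrt_mul (by positivity) _
  have hR : 0 ≤ a * Real.sqrt (x1 ^ 2 + y1 ^ 2) + b * Real.sqrt (x2 ^ 2 + y2 ^ 2) := by
    positivity
  have hcross : a * b * (x1 * x2 + y1 * y2)
      ≤ a * b * (Real.sqrt (x1 ^ 2 + y1 ^ 2) * Real.sqrt (x2 ^ 2 + y2 ^ 2)) :=
    mul_le_mul_of_nonneg_left h1 (mul_nonneg ha hb)
  have harg : (a * x1 + b * x2) ^ 2 + (a * y1 + b * y2) ^ 2
      ≤ (a * Real.sqrt (x1 ^ 2 + y1 ^ 2) + b * Real.sqrt (x2 ^ 2 + y2 ^ 2)) ^ 2 := by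
    have expand2 : (a * Real.sqrt (x1 ^ 2 + y1 ^ 2) + b * Real.sqrt (x2 ^ 2 + y2 ^ 2)) ^ 2
        = a ^ 2 * (x1 ^ 2 + y1 ^ 2) + b ^ 2 * (x2 ^ 2 + y2 ^ 2)
          + 2 * (a * b * (Real.sqrt (x1 ^ 2 + y1 ^ 2) * Real.sqrt (x2 ^ 2 + y2 ^ 2))) := by
      linear_combination a ^ 2 * s1 + b ^ 2 * s2
    rw [expand2]
    nlinarith [hcross]
  calc Real.sqrt ((a * x1 + b * x2) ^ 2 + (a * y1 + b * y2) ^ 2)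
      ≤ Real.sqrt ((a * Real.sqrt (x1 ^ 2 + y1 ^ 2) + b * Real.sqrt (x2 ^ 2 + y2 ^ 2)) ^ 2) :=
        Real.sqrt_le_sqrt harg
    _ = _ := Real.sqrt_sq hR

lemma quad_div_lin {a b n1 n2 d1 d2 : ℝ} (ha : 0 ≤ a) (hb : 0 ≤ b) (hab : a + b = 1)
    (hd1 : 0 < d1) (hd2 : 0 < d2) :
    (a * n1 + b * n2) ^ 2 / (a * d1 + b * d2) ≤ a * (n1 ^ 2 / d1) + b * (n2 ^ 2 / d2) := by
  have hD : 0 < a * d1 + b * d2 := combo_pos ha hb hab hd1 hd2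
  have key : 2 * n1 * n2 ≤ n1 ^ 2 / d1 * d2 + n2 ^ 2 / d2 * d1 := by
    rw [div_mul_eq_mul_div, div_mul_eq_mul_div, div_add_div _ _ hd1.ne' hd2.ne',
      le_div_iff₀ (mul_pos hd1 hd2)]
    nlinarith [sq_nonneg (n1 * d2 - n2 * d1)]
  have e1 : n1 ^ 2 / d1 * d1 = n1 ^ 2 := div_mul_cancel₀ _ hd1.ne'
  have e2 : n2 ^ 2 / d2 * d2 = n2 ^ 2 := div_mul_cancel₀ _ hd2.ne'
  rw [div_le_iff₀ hD]
  have expand : (a * (n1 ^ 2 / d1) + b * (n2 ^ 2 / d2)) * (a * d1 + b * d2)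
      - (a * n1 + b * n2) ^ 2
      = a * b * (n1 ^ 2 / d1 * d2 + n2 ^ 2 / d2 * d1 - 2 * n1 * n2) := by
    linear_combination a ^ 2 * e1 + b ^ 2 * e2
  have hX : 0 ≤ n1 ^ 2 / d1 * d2 + n2 ^ 2 / d2 * d1 - 2 * n1 * n2 := by linarith [key]
  nlinarith [expand, mul_nonneg (mul_nonneg ha hb) hX]

lemma NN_combo_le {a b : ℝ} (ha : 0 ≤ a) (hb : 0 ≤ b)
    (X Y : Matrix (Fin 2) (Fin 2) ℝ) :
    NN (a • X + b • Y) ≤ a * NN X + b * NN Y := by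
  have h1 := sqrt_add_sq_convex a b (X 0 0 + X 1 1) (X 0 1 - X 1 0)
    (Y 0 0 + Y 1 1) (Y 0 1 - Y 1 0) ha hb
  have h2 := sqrt_add_sq_convex a b (X 0 0 - X 1 1) (X 0 1 + X 1 0)
    (Y 0 0 - Y 1 1) (Y 0 1 + Y 1 0) ha hb
  unfold NN
  simp only [Matrix.add_apply, Matrix.smul_apply, smul_eq_mul]
  rw [show (a * X 0 0 + b * Y 0 0 + (a * X 1 1 + b * Y 1 1)) ^ 2
      + (a * X 0 1 + b * Y 0 1 - (a * X 1 0 + b * Y 1 0)) ^ 2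
      = (a * (X 0 0 + X 1 1) + b * (Y 0 0 + Y 1 1)) ^ 2
      + (a * (X 0 1 - X 1 0) + b * (Y 0 1 - Y 1 0)) ^ 2 by ring,
    show (a * X 0 0 + b * Y 0 0 - (a * X 1 1 + b * Y 1 1)) ^ 2
      + (a * X 0 1 + b * Y 0 1 + (a * X 1 0 + b * Y 1 0)) ^ 2
      = (a * (X 0 0 - X 1 1) + b * (Y 0 0 - Y 1 1)) ^ 2
      + (a * (X 0 1 + X 1 0) + b * (Y 0 1 + Y 1 0)) ^ 2 by ring]
  linarith

/-! ### (i) ⇒ (ii) -/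

lemma rankone_of_poly (W : Matrix (Fin 2) (Fin 2) ℝ → ℝ) :
    PolyconvexGLp W → RankOneConvexGLp W := by
  rintro ⟨P, hPc, hPe⟩ F hF ξ η hseg θ hθ
  set R := vecMulVec ξ η with hR
  have hG : 0 < (F + R).det := by
    have := hseg 1 ⟨zero_le_one, le_refl 1⟩
    rw [one_smul] at this
    exact this
  have hcombM : θ • F + (1 - θ) • (F + R) = F + (1 - θ) • R := by
    ext i j
    simp only [Matrix.add_apply, Matrix.smul_apply, smul_eq_mul]
    ring
  have hcd : 0 < (F + (1 - θ) • R).det :=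
    hseg (1 - θ) ⟨by linarith [hθ.2], by linarith [hθ.1]⟩
  have hdet : (F + (1 - θ) • R).det = θ * F.det + (1 - θ) * (F + R).det := by
    simp only [Matrix.det_fin_two, Matrix.add_apply, Matrix.smul_apply, smul_eq_mul, hR,
      Matrix.vecMulVec_apply]
    ring
  have e1 : (W F : EReal) = P (F, F.det) := by rw [← hPe F, if_pos hF]
  have e2 : (W (F + R) : EReal) = P (F + R, (F + R).det) := by rw [← hPe _, if_pos hG]
  have hprod : θ • ((F, F.det) : Matrix (Fin 2) (Fin 2) ℝ × ℝ)
      + (1 - θ) • ((F + R, (F + R).det) : Matrix (Fin 2) (Fin 2) ℝ × ℝ)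
      = (θ • F + (1 - θ) • (F + R), (θ • F + (1 - θ) • (F + R)).det) := by
    refine Prod.ext rfl ?_
    show θ • F.det + (1 - θ) • (F + R).det = (θ • F + (1 - θ) • (F + R)).det
    rw [hcombM, hdet, smul_eq_mul, smul_eq_mul]
  have e3 : (W (θ • F + (1 - θ) • (F + R)) : EReal)
      = P (θ • (F, F.det) + (1 - θ) • (F + R, (F + R).det)) := by
    rw [hprod, ← hPe _, if_pos (by rw [hcombM]; exact hcd)]
  have hkey := hPc (F, F.det) (F + R, (F + R).det) θ (1 - θ) hθ.1 (by linarith [hθ.2]) (by ring)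
  have : (W (θ • F + (1 - θ) • (F + R)) : EReal)
      ≤ ((θ * W F + (1 - θ) * W (F + R) : ℝ) : EReal) := by
    rw [e3]
    refine hkey.trans_eq ?_
    rw [← e1, ← e2, EReal.coe_add, EReal.coe_mul, EReal.coe_mul]
  exact_mod_cast this

/-! ### (ii) ⇒ (iii) -/

lemma sep_of_rankone (W : Matrix (Fin 2) (Fin 2) ℝ → ℝ) (g : ℝ → ℝ → ℝ)
    (hWd : ∀ x y : ℝ, 0 < x → 0 < y → W (Dg x y) = g x y)
    (hRO : RankOneConvexGLp W) :
    (∀ l2 ∈ Set.Ioi (0:ℝ), ConvexOn ℝ (Set.Ioi 0) (fun l1 => g l1 l2)) ∧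
    (∀ l1 ∈ Set.Ioi (0:ℝ), ConvexOn ℝ (Set.Ioi 0) (fun l2 => g l1 l2)) := by
  constructor
  · intro l2 hl2
    refine ⟨convex_Ioi 0, fun x hx y hy a b ha hb hab => ?_⟩
    simp only [smul_eq_mul]
    have hl2' : (0:ℝ) < l2 := hl2
    have hx' : (0:ℝ) < x := hx
    have hy' : (0:ℝ) < y := hy
    have hmat : ∀ t : ℝ, Dg x l2 + t • vecMulVec ![1, 0] ![y - x, 0]
        = Dg (x + t * (y - x)) l2 := by
      intro t
      ext i j
      fin_cases i <;> fin_cases j <;>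
        simp [Dg, Matrix.vecMulVec_apply, Matrix.add_apply, Matrix.smul_apply]
    have hseg : ∀ t ∈ Set.Icc (0:ℝ) 1,
        0 < (Dg x l2 + t • vecMulVec ![1, 0] ![y - x, 0]).det := by
      intro t ht
      rw [hmat t, Dg_det]
      have hxt : 0 < x + t * (y - x) := by
        have := combo_pos (by linarith [ht.2] : (0:ℝ) ≤ 1 - t) ht.1
          (by ring : (1 - t) + t = 1) hx' hy'
        nlinarith
      exact mul_pos hxt hl2'
    have happ := hRO (Dg x l2) (Dg_det_pos hx' hl2') ![1, 0] ![y - x, 0] hseg a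
      ⟨ha, by linarith⟩
    have hFR : Dg x l2 + vecMulVec ![1, 0] ![y - x, 0] = Dg y l2 := by
      have := hmat 1
      rw [one_smul] at this
      rw [this]
      congr 1
      ring
    have hcomb : a • Dg x l2 + (1 - a) • (Dg x l2 + vecMulVec ![1, 0] ![y - x, 0])
        = Dg (a * x + b * y) l2 := by
      rw [hFR]
      ext i j
      fin_cases i <;> fin_cases j <;>
        simp [Dg, Matrix.add_apply, Matrix.smul_apply] <;>
        first
        | (left; linarith)
        | ring
        | linear_combination (-y) * hab
    rw [hcomb, hFR] at happ
    rw [hWd _ _ (combo_pos ha hb hab hx' hy') hl2', hWd _ _ hx' hl2',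
      hWd _ _ hy' hl2'] at happ
    have hba : 1 - a = b := by linarith
    rw [hba] at happ
    exact happ
  · intro l1 hl1
    refine ⟨convex_Ioi 0, fun x hx y hy a b ha hb hab => ?_⟩
    simp only [smul_eq_mul]
    have hl1' : (0:ℝ) < l1 := hl1
    have hx' : (0:ℝ) < x := hx
    have hy' : (0:ℝ) < y := hy
    have hmat : ∀ t : ℝ, Dg l1 x + t • vecMulVec ![0, 1] ![0, y - x]
        = Dg l1 (x + t * (y - x)) := by
      intro t
      ext i j
      fin_cases i <;> fin_cases j <;>
        simp [Dg, Matrix.vecMulVec_apply, Matrix.add_apply, Matrix.smul_apply]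
    have hseg : ∀ t ∈ Set.Icc (0:ℝ) 1,
        0 < (Dg l1 x + t • vecMulVec ![0, 1] ![0, y - x]).det := by
      intro t ht
      rw [hmat t, Dg_det]
      have hxt : 0 < x + t * (y - x) := by
        have := combo_pos (by linarith [ht.2] : (0:ℝ) ≤ 1 - t) ht.1
          (by ring : (1 - t) + t = 1) hx' hy'
        nlinarith
      exact mul_pos hl1' hxt
    have happ := hRO (Dg l1 x) (Dg_det_pos hl1' hx') ![0, 1] ![0, y - x] hseg a
      ⟨ha, by linarith⟩
    have hFR : Dg l1 x + vecMulVec ![0, 1] ![0, y - x] = Dg l1 y := by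
      have := hmat 1
      rw [one_smul] at this
      rw [this]
      congr 1
      ring
    have hcomb : a • Dg l1 x + (1 - a) • (Dg l1 x + vecMulVec ![0, 1] ![0, y - x])
        = Dg l1 (a * x + b * y) := by
      rw [hFR]
      ext i j
      fin_cases i <;> fin_cases j <;>
        simp [Dg, Matrix.add_apply, Matrix.smul_apply] <;>
        first
        | (left; linarith)
        | ring
        | linear_combination (-y) * hab
    rw [hcomb, hFR] at happ
    rw [hWd _ _ hl1' (combo_pos ha hb hab hx' hy'), hWd _ _ hl1' hx',
      hWd _ _ hl1' hy'] at happ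
    have hba : 1 - a = b := by linarith
    rw [hba] at happ
    exact happ

/-! ### (iii) ⇒ (iv) -/

lemma conv_of_sep (g : ℝ → ℝ → ℝ) (h : ℝ → ℝ)
    (hgh1 : ∀ t : ℝ, 0 < t → g t 1 = h t)
    (hsep : ∀ l2 ∈ Set.Ioi (0:ℝ), ConvexOn ℝ (Set.Ioi 0) (fun l1 => g l1 l2)) :
    ConvexOn ℝ (Set.Ioi 0) h := by
  refine ⟨convex_Ioi 0, fun x hx y hy a b ha hb hab => ?_⟩
  simp only [smul_eq_mul]
  have hx' : (0:ℝ) < x := hx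
  have hy' : (0:ℝ) < y := hy
  have hc : (0:ℝ) < a * x + b * y := combo_pos ha hb hab hx' hy'
  rw [← hgh1 _ hc, ← hgh1 x hx', ← hgh1 y hy']
  have := (hsep 1 (Set.mem_Ioi.mpr one_pos)).2 hx hy ha hb hab
  simpa using this

/-! ### (iv) ⇒ (iii) -/

lemma sep_of_conv (g : ℝ → ℝ → ℝ) (h : ℝ → ℝ)
    (hgh : ∀ x y : ℝ, 0 < x → 0 < y → g x y = h (x / y))
    (hgh' : ∀ x y : ℝ, 0 < x → 0 < y → g x y = h (y / x))
    (hch : ConvexOn ℝ (Set.Ioi 0) h) :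
    (∀ l2 ∈ Set.Ioi (0:ℝ), ConvexOn ℝ (Set.Ioi 0) (fun l1 => g l1 l2)) ∧
    (∀ l1 ∈ Set.Ioi (0:ℝ), ConvexOn ℝ (Set.Ioi 0) (fun l2 => g l1 l2)) := by
  constructor
  · intro l2 hl2
    have hl2' : (0:ℝ) < l2 := hl2
    refine ⟨convex_Ioi 0, fun x hx y hy a b ha hb hab => ?_⟩
    simp only [smul_eq_mul]
    have hx' : (0:ℝ) < x := hx
    have hy' : (0:ℝ) < y := hy
    have hc : (0:ℝ) < a * x + b * y := combo_pos ha hb hab hx' hy'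
    rw [hgh _ _ hc hl2', hgh _ _ hx' hl2', hgh _ _ hy' hl2']
    rw [show (a * x + b * y) / l2 = a * (x / l2) + b * (y / l2) by ring]
    have := hch.2 (Set.mem_Ioi.mpr (div_pos hx' hl2')) (Set.mem_Ioi.mpr (div_pos hy' hl2'))
      ha hb hab
    simpa using this
  · intro l1 hl1
    have hl1' : (0:ℝ) < l1 := hl1
    refine ⟨convex_Ioi 0, fun x hx y hy a b ha hb hab => ?_⟩
    simp only [smul_eq_mul]
    have hx' : (0:ℝ) < x := hx
    have hy' : (0:ℝ) < y := hy
    have hc : (0:ℝ) < a * x + b * y := combo_pos ha hb hab hx' hy'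
    rw [hgh' _ _ hl1' hc, hgh' _ _ hl1' hx', hgh' _ _ hl1' hy']
    rw [show (a * x + b * y) / l1 = a * (x / l1) + b * (y / l1) by ring]
    have := hch.2 (Set.mem_Ioi.mpr (div_pos hx' hl1')) (Set.mem_Ioi.mpr (div_pos hy' hl1'))
      ha hb hab
    simpa using this

/-! ### (iv) ⇒ (v) -/

lemma ici_of_ioi (h : ℝ → ℝ) (hsym : ∀ t : ℝ, 0 < t → h (1 / t) = h t)
    (hch : ConvexOn ℝ (Set.Ioi 0) h) :
    ConvexOn ℝ (Set.Ici 1) h ∧ MonotoneOn h (Set.Ici 1) := by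
  constructor
  · exact hch.subset (fun x hx => show (0:ℝ) < x from lt_of_lt_of_le one_pos hx) (convex_Ici 1)
  · intro s hs t ht hst
    rcases eq_or_lt_of_le hst with rfl | hlt
    · exact le_refl _
    · have hs1 : (1:ℝ) ≤ s := hs
      have ht1 : (1:ℝ) < t := lt_of_le_of_lt hs1 hlt
      have ht0 : (0:ℝ) < t := by linarith
      have hden : 0 < t - 1 / t := by
        rw [sub_pos, div_lt_iff₀ ht0]; nlinarith
      have hA : 0 ≤ (t - s) / (t - 1 / t) := div_nonneg (by linarith) hden.le
      have hinv : 1 / t ≤ 1 := by rw [div_le_one ht0]; linarith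
      have hB : 0 ≤ (s - 1 / t) / (t - 1 / t) := div_nonneg (by linarith) hden.le
      have hAB : (t - s) / (t - 1 / t) + (s - 1 / t) / (t - 1 / t) = 1 := by
        rw [← add_div, div_eq_one_iff_eq hden.ne']; ring
      have hcomb : (t - s) / (t - 1 / t) * (1 / t) + (s - 1 / t) / (t - 1 / t) * t = s := by
        rw [div_mul_eq_mul_div, div_mul_eq_mul_div, ← add_div, div_eq_iff hden.ne']
        field_simp
        ring
      have hkey := hch.2 (Set.mem_Ioi.mpr (by positivity : (0:ℝ) < 1 / t))
        (Set.mem_Ioi.mpr ht0) hA hB hAB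
      simp only [smul_eq_mul] at hkey
      rw [hcomb, hsym t ht0] at hkey
      calc h s ≤ (t - s) / (t - 1 / t) * h t + (s - 1 / t) / (t - 1 / t) * h t := hkey
        _ = h t := by rw [← add_mul, hAB, one_mul]

/-! ### (v) ⇒ (iv) -/

lemma ioi_of_ici (h : ℝ → ℝ) (hsym : ∀ t : ℝ, 0 < t → h (1 / t) = h t)
    (hc : ConvexOn ℝ (Set.Ici 1) h) (hm : MonotoneOn h (Set.Ici 1)) :
    ConvexOn ℝ (Set.Ioi 0) h := by
  refine ⟨convex_Ioi 0, fun x hx y hy a b ha hb hab => ?_⟩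
  simp only [smul_eq_mul]
  have hx' : (0:ℝ) < x := hx
  have hy' : (0:ℝ) < y := hy
  have hz : (0:ℝ) < a * x + b * y := combo_pos ha hb hab hx' hy'
  have hr1 : ∀ t : ℝ, 0 < t → 1 ≤ max t (1 / t) := by
    intro t ht
    rcases le_total 1 t with h1 | h1
    · exact h1.trans (le_max_left _ _)
    · exact (one_le_one_div ht h1).trans (le_max_right _ _)
  have hhr : ∀ t : ℝ, 0 < t → h (max t (1 / t)) = h t := by
    intro t ht
    rcases le_total 1 t with h1 | h1
    · have hle : 1 / t ≤ t := by rw [div_le_iff₀ ht]; nlinarith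
      rw [max_eq_left hle]
    · have hle : t ≤ 1 / t := by rw [le_div_iff₀ ht]; nlinarith
      rw [max_eq_right hle, hsym t ht]
  have hinv : 1 / (a * x + b * y) ≤ a * (1 / x) + b * (1 / y) := by
    have h1 : x * y ≤ (a * y + b * x) * (a * x + b * y) := by
      have key : (a * y + b * x) * (a * x + b * y) - x * y = a * b * (x - y) ^ 2 := by
        linear_combination (x * y * (a + b + 1)) * hab
      linarith [key, mul_nonneg (mul_nonneg ha hb) (sq_nonneg (x - y))]
    have h2 : 1 / (a * x + b * y) ≤ (a * y + b * x) / (x * y) := by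
      rw [div_le_div_iff₀ hz (mul_pos hx' hy')]; linarith
    have h3 : (a * y + b * x) / (x * y) = a * (1 / x) + b * (1 / y) := by
      field_simp
      try ring
    rw [h3] at h2
    exact h2
  have hrz : max (a * x + b * y) (1 / (a * x + b * y))
      ≤ a * max x (1 / x) + b * max y (1 / y) := by
    apply max_le
    · exact add_le_add (mul_le_mul_of_nonneg_left (le_max_left _ _) ha)
        (mul_le_mul_of_nonneg_left (le_max_left _ _) hb)
    · exact hinv.trans (add_le_add (mul_le_mul_of_nonneg_left (le_max_right _ _) ha)
        (mul_le_mul_of_nonneg_left (le_max_right _ _) hb))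
  have hmem1 : (1:ℝ) ≤ a * max x (1 / x) + b * max y (1 / y) := by
    have h1 := mul_le_mul_of_nonneg_left (hr1 x hx') ha
    have h2 := mul_le_mul_of_nonneg_left (hr1 y hy') hb
    rw [mul_one] at h1 h2
    linarith
  calc h (a * x + b * y) = h (max (a * x + b * y) (1 / (a * x + b * y))) := (hhr _ hz).symm
    _ ≤ h (a * max x (1 / x) + b * max y (1 / y)) :=
        hm (Set.mem_Ici.mpr (hr1 _ hz)) (Set.mem_Ici.mpr hmem1) hrz
    _ ≤ a * h (max x (1 / x)) + b * h (max y (1 / y)) := by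
        have := hc.2 (Set.mem_Ici.mpr (hr1 x hx')) (Set.mem_Ici.mpr (hr1 y hy')) ha hb hab
        simpa using this
    _ = a * h x + b * h y := by rw [hhr x hx', hhr y hy']

/-! ### (v) ⇒ (i): the polyconvexity construction -/

lemma ereal_coe_mul_ite_ne_bot (a c : ℝ) (p : Prop) [Decidable p] (ha : 0 < a) :
    (a : EReal) * (if p then ((c : ℝ) : EReal) else ⊤) ≠ ⊥ := by
  split
  · rw [← EReal.coe_mul]; exact EReal.coe_ne_bot _
  · rw [EReal.mul_top_of_pos (by exact_mod_cast ha)]; exact top_ne_bot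

lemma poly_of_conv_mono (W : Matrix (Fin 2) (Fin 2) ℝ → ℝ) (h : ℝ → ℝ)
    (hWN : ∀ F : Matrix (Fin 2) (Fin 2) ℝ, 0 < F.det →
      W F = h (max (NN F ^ 2 / F.det) 1))
    (hc : ConvexOn ℝ (Set.Ici 1) h) (hm : MonotoneOn h (Set.Ici 1)) :
    PolyconvexGLp W := by
  refine ⟨fun x => if 0 < x.2 then ((h (max (NN x.1 ^ 2 / x.2) 1) : ℝ) : EReal) else ⊤,
    ?_, ?_⟩
  · intro x y a b ha hb hab
    rcases eq_or_lt_of_le ha with rfl | ha'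
    · have hb1 : b = 1 := by linarith
      subst hb1
      simp only [zero_smul, one_smul, zero_add, EReal.coe_zero, EReal.coe_one, zero_mul,
        one_mul]
      exact le_of_eq rfl
    rcases eq_or_lt_of_le hb with rfl | hb'
    · have ha1 : a = 1 := by linarith
      subst ha1
      simp only [zero_smul, one_smul, add_zero, EReal.coe_zero, EReal.coe_one, zero_mul,
        one_mul]
      exact le_of_eq rfl
    obtain ⟨X, dx⟩ := x
    obtain ⟨Y, dy⟩ := y
    simp only [Prod.smul_mk, Prod.mk_add_mk, smul_eq_mul]
    by_cases hdx : 0 < dx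
    · by_cases hdy : 0 < dy
      · -- main case
        have hD : 0 < a * dx + b * dy := combo_pos ha hb hab hdx hdy
        simp only [if_pos hdx, if_pos hdy, if_pos hD]
        rw [← EReal.coe_mul, ← EReal.coe_mul, ← EReal.coe_add, EReal.coe_le_coe_iff]
        have hNc : NN (a • X + b • Y) ≤ a * NN X + b * NN Y := NN_combo_le ha hb X Y
        have hq1 : NN (a • X + b • Y) ^ 2 / (a * dx + b * dy)
            ≤ (a * NN X + b * NN Y) ^ 2 / (a * dx + b * dy) :=
          by gcongr <;> first | exact NN_nonneg _ | exact hNc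
        have hq2 : (a * NN X + b * NN Y) ^ 2 / (a * dx + b * dy)
            ≤ a * (NN X ^ 2 / dx) + b * (NN Y ^ 2 / dy) :=
          quad_div_lin ha hb hab hdx hdy
        have hu1 : (1:ℝ) ≤ max (NN X ^ 2 / dx) 1 := le_max_right _ _
        have hv1 : (1:ℝ) ≤ max (NN Y ^ 2 / dy) 1 := le_max_right _ _
        have hS : a * (NN X ^ 2 / dx) + b * (NN Y ^ 2 / dy)
            ≤ a * max (NN X ^ 2 / dx) 1 + b * max (NN Y ^ 2 / dy) 1 :=
          add_le_add (mul_le_mul_of_nonneg_left (le_max_left _ _) ha)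
            (mul_le_mul_of_nonneg_left (le_max_left _ _) hb)
        have h1uv : (1:ℝ) ≤ a * max (NN X ^ 2 / dx) 1 + b * max (NN Y ^ 2 / dy) 1 := by
          have h1 := mul_le_mul_of_nonneg_left hu1 ha
          have h2 := mul_le_mul_of_nonneg_left hv1 hb
          rw [mul_one] at h1 h2
          linarith
        have hmaxle : max (NN (a • X + b • Y) ^ 2 / (a * dx + b * dy)) 1
            ≤ a * max (NN X ^ 2 / dx) 1 + b * max (NN Y ^ 2 / dy) 1 :=
          max_le (by linarith) h1uv
        calc h (max (NN (a • X + b • Y) ^ 2 / (a * dx + b * dy)) 1)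
            ≤ h (a * max (NN X ^ 2 / dx) 1 + b * max (NN Y ^ 2 / dy) 1) :=
              hm (Set.mem_Ici.mpr (le_max_right _ _)) (Set.mem_Ici.mpr h1uv) hmaxle
          _ ≤ a * h (max (NN X ^ 2 / dx) 1) + b * h (max (NN Y ^ 2 / dy) 1) := by
              have := hc.2 (Set.mem_Ici.mpr hu1) (Set.mem_Ici.mpr hv1) ha hb hab
              simpa using this
      · -- dy ≤ 0 : right side is ⊤
        rw [if_neg hdy, EReal.mul_top_of_pos (by exact_mod_cast hb' : (0:EReal) < b),
          EReal.add_top_of_ne_bot (ereal_coe_mul_ite_ne_bot a _ _ ha')]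
        exact le_top
    · -- dx ≤ 0 : right side is ⊤
      rw [if_neg hdx, EReal.mul_top_of_pos (by exact_mod_cast ha' : (0:EReal) < a),
        EReal.top_add_of_ne_bot (ereal_coe_mul_ite_ne_bot b _ _ hb')]
      exact le_top
  · intro F
    dsimp only
    by_cases hdF : 0 < F.det
    · rw [if_pos hdF, if_pos hdF, hWN F hdF]
    · rw [if_neg hdF, if_neg hdF]

/-- For `W : GL⁺(2) → ℝ` objective, isotropic and isochoric,
with `W(F) = g(λ₁, λ₂) = h(λ₁/λ₂) = h(λ₂/λ₁)` in terms of the singular values,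
the following are equivalent: (i) `W` polyconvex; (ii) `W` rank-one convex;
(iii) `g` separately convex; (iv) `h` convex on `(0,∞)`; (v) `h` convex and
nondecreasing on `[1,∞)`. -/
theorem isochoric_rankOne_polyconvex_tfae
    (W : Matrix (Fin 2) (Fin 2) ℝ → ℝ)
    (hobj : ∀ F : Matrix (Fin 2) (Fin 2) ℝ, 0 < F.det →
      ∀ Q₁ Q₂ : Matrix (Fin 2) (Fin 2) ℝ, Q₁ᵀ * Q₁ = 1 → Q₂ᵀ * Q₂ = 1 →
        W (Q₁ * F * Q₂) = W F)
    (hisoch : ∀ a : ℝ, 0 < a → ∀ F : Matrix (Fin 2) (Fin 2) ℝ, 0 < F.det →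
      W (a • F) = W F)
    (g : ℝ → ℝ → ℝ) (h : ℝ → ℝ)
    (hg : ∀ F : Matrix (Fin 2) (Fin 2) ℝ, 0 < F.det →
      ∀ l1 l2 : ℝ, 0 < l1 → 0 < l2 → IsSingVals F l1 l2 → W F = g l1 l2)
    (hh : ∀ F : Matrix (Fin 2) (Fin 2) ℝ, 0 < F.det →
      ∀ l1 l2 : ℝ, 0 < l1 → 0 < l2 → IsSingVals F l1 l2 → W F = h (l1 / l2))
    (hh' : ∀ F : Matrix (Fin 2) (Fin 2) ℝ, 0 < F.det →
      ∀ l1 l2 : ℝ, 0 < l1 → 0 < l2 → IsSingVals F l1 l2 → W F = h (l2 / l1)) :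
    (PolyconvexGLp W ↔ RankOneConvexGLp W) ∧
    (RankOneConvexGLp W ↔
      ((∀ l2 ∈ Set.Ioi (0:ℝ), ConvexOn ℝ (Set.Ioi 0) (fun l1 => g l1 l2)) ∧
       (∀ l1 ∈ Set.Ioi (0:ℝ), ConvexOn ℝ (Set.Ioi 0) (fun l2 => g l1 l2)))) ∧
    (((∀ l2 ∈ Set.Ioi (0:ℝ), ConvexOn ℝ (Set.Ioi 0) (fun l1 => g l1 l2)) ∧
      (∀ l1 ∈ Set.Ioi (0:ℝ), ConvexOn ℝ (Set.Ioi 0) (fun l2 => g l1 l2))) ↔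
      ConvexOn ℝ (Set.Ioi 0) h) ∧
    (ConvexOn ℝ (Set.Ioi 0) h ↔
      (ConvexOn ℝ (Set.Ici 1) h ∧ MonotoneOn h (Set.Ici 1))) := by
  -- basic consequences of the hypotheses on diagonal matrices
  have hWd : ∀ x y : ℝ, 0 < x → 0 < y → W (Dg x y) = g x y := fun x y hx hy =>
    hg _ (Dg_det_pos hx hy) x y hx hy (Dg_isSingVals x y hx hy)
  have hgh : ∀ x y : ℝ, 0 < x → 0 < y → g x y = h (x / y) := fun x y hx hy =>
    (hWd x y hx hy).symm.trans
      (hh _ (Dg_det_pos hx hy) x y hx hy (Dg_isSingVals x y hx hy))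
  have hgh' : ∀ x y : ℝ, 0 < x → 0 < y → g x y = h (y / x) := fun x y hx hy =>
    (hWd x y hx hy).symm.trans
      (hh' _ (Dg_det_pos hx hy) x y hx hy (Dg_isSingVals x y hx hy))
  have hgh1 : ∀ t : ℝ, 0 < t → g t 1 = h t := by
    intro t ht
    have := hgh t 1 ht one_pos
    rwa [div_one] at this
  have hsym : ∀ t : ℝ, 0 < t → h (1 / t) = h t := by
    intro t ht
    have h1 := hgh t 1 ht one_pos
    have h2 := hgh' t 1 ht one_pos
    rw [div_one] at h1
    rw [← h1, ← h2]
  have hWN : ∀ F : Matrix (Fin 2) (Fin 2) ℝ, 0 < F.det →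
      W F = h (max (NN F ^ 2 / F.det) 1) := by
    intro F hdF
    have hN := NN_pos hdF
    have hl2 : 0 < F.det / NN F := div_pos hdF hN
    have := hh F hdF (NN F) (F.det / NN F) hN hl2 (NN_isSingVals hdF)
    rw [this]
    congr 1
    rw [max_eq_left ((one_le_div hdF).mpr (NN_facts hdF).2)]
    rw [div_div_eq_mul_div]
    ring
  -- the implications
  have imp_i_ii := rankone_of_poly W
  have imp_ii_iii := sep_of_rankone W g hWd
  have imp_iii_iv := fun hsep :
      ((∀ l2 ∈ Set.Ioi (0:ℝ), ConvexOn ℝ (Set.Ioi 0) (fun l1 => g l1 l2)) ∧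
       (∀ l1 ∈ Set.Ioi (0:ℝ), ConvexOn ℝ (Set.Ioi 0) (fun l2 => g l1 l2))) =>
    conv_of_sep g h hgh1 hsep.1
  have imp_iv_iii := sep_of_conv g h hgh hgh'
  have imp_iv_v := ici_of_ioi h hsym
  have imp_v_iv := fun hv : ConvexOn ℝ (Set.Ici 1) h ∧ MonotoneOn h (Set.Ici 1) =>
    ioi_of_ici h hsym hv.1 hv.2
  have imp_v_i := fun hv : ConvexOn ℝ (Set.Ici 1) h ∧ MonotoneOn h (Set.Ici 1) =>
    poly_of_conv_mono W h hWN hv.1 hv.2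
  refine ⟨⟨imp_i_ii, fun hR => imp_v_i (imp_iv_v (imp_iii_iv (imp_ii_iii hR)))⟩,
    ⟨imp_ii_iii, fun hsep => imp_i_ii (imp_v_i (imp_iv_v (imp_iii_iv hsep)))⟩,
    ⟨imp_iii_iv, imp_iv_iii⟩,
    ⟨imp_iv_v, imp_v_iv⟩⟩
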